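/- Fix m > 0. Let V ⊆ ℝ be a nondegenerate interval and J a nondegenerate subinterval of [1, m+1] containing 1 such that for every C ∈ V the smooth nonnegative solution v(·; C) of the ODE IVP v'(γ) = 2√2·√(v(γ)) + p_C(γ)·γ, v(1) = 2, exists on J. Then for all C, D ∈ V with C < D and all γ ∈ J: v(γ; C) ≥ v(γ; D) − Q(γ)·(D − C) ≥ v(γ; D), and the second inequality is strict whenever γ > 1. -/

import Mathlib

open Set Filter

open Topology

/-- The coefficient `A(C)` from the paper (depending on `m`). -/
noncomputable def Acoef (m C : ℝ) : ℝ :=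
  3 * C / m * (1 - 1 / (m + 1) ^ 2) - 6 / m * (1 + 1 / (m + 1) ^ 2)

/-- The coefficient `B(C)` from the paper (depending on `m`). -/
noncomputable def Bcoef (m C : ℝ) : ℝ :=
  -2 * C * (1 + 1 / m - 1 / (m * (m + 1) ^ 2)) + 4 * (1 + 1 / m + 1 / (m * (m + 1) ^ 2))

/-- The polynomial `p_C(γ) = A(C)·γ³/3 + B(C)·γ²/2 + C`. -/
noncomputable def pC (m C γ : ℝ) : ℝ :=
  Acoef m C * γ ^ 3 / 3 + Bcoef m C * γ ^ 2 / 2 + C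

/-- The right-hand side `2√2·√(v γ) + p_C(γ)·γ` of the ODE. -/
noncomputable def odeRHS (m C : ℝ) (v : ℝ → ℝ) (γ : ℝ) : ℝ :=
  2 * Real.sqrt 2 * Real.sqrt (v γ) + pC m C γ * γ

/-- `v` is a `C¹` nonnegative solution of the ODE IVP
`v' = 2√2·√v + p_C(γ)·γ`, `v 1 = 2`, on the set `S`. -/
def IsSolOn (m C : ℝ) (v : ℝ → ℝ) (S : Set ℝ) : Prop :=
  v 1 = 2 ∧ ∀ γ ∈ S, 0 ≤ v γ ∧ HasDerivWithinAt v (odeRHS m C v γ) S γ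

/-- `v` is a solution of the IVP on `S` which cannot be continued to any strictly
larger subinterval of `[1, m+1]`, i.e. `S` is the maximal interval of existence. -/
def IsMaxSolOn (m C : ℝ) (v : ℝ → ℝ) (S : Set ℝ) : Prop :=
  IsSolOn m C v S ∧
    ∀ T : Set ℝ, T ⊆ Set.Icc 1 (m + 1) → T.OrdConnected → S ⊆ T → S ≠ T →
      ¬∃ w : ℝ → ℝ, IsSolOn m C w T ∧ ∀ γ ∈ S, w γ = v γ

/-- The polynomial `q(γ) = ((m+2)/(m+1)²)·γ⁴ − ((m²+3m+3)/(m+1)²)·γ³ + γ`. -/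
noncomputable def qPoly (m γ : ℝ) : ℝ :=
  (m + 2) / (m + 1) ^ 2 * γ ^ 4 - (m ^ 2 + 3 * m + 3) / (m + 1) ^ 2 * γ ^ 3 + γ

/-- `Q(γ) = ∫₁^γ q(y) dy`. -/
noncomputable def QPoly (m γ : ℝ) : ℝ := ∫ y in (1 : ℝ)..γ, qPoly m y

lemma QPoly_eq (m γ : ℝ) : QPoly m γ =
    (m+2)/(m+1)^2 * ((γ^5 - 1)/5) - (m^2+3*m+3)/(m+1)^2 * ((γ^4 - 1)/4) + (γ^2 - 1)/2 := by
  have h1 : IntervalIntegrable (fun y : ℝ => (m+2)/(m+1)^2 * y^4) MeasureTheory.volume 1 γ := by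
    apply Continuous.intervalIntegrable; continuity
  have h2 : IntervalIntegrable (fun y : ℝ => (m^2+3*m+3)/(m+1)^2 * y^3) MeasureTheory.volume 1 γ := by
    apply Continuous.intervalIntegrable; continuity
  have h3 : IntervalIntegrable (fun y : ℝ => y) MeasureTheory.volume 1 γ := by
    apply Continuous.intervalIntegrable; continuity
  have : QPoly m γ = (∫ y in (1:ℝ)..γ, (m+2)/(m+1)^2 * y^4)
      - (∫ y in (1:ℝ)..γ, (m^2+3*m+3)/(m+1)^2 * y^3) + (∫ y in (1:ℝ)..γ, y) := by
    rw [← intervalIntegral.integral_sub h1 h2, ← intervalIntegral.integral_add (h1.sub h2) h3]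
    rfl
  rw [this, intervalIntegral.integral_const_mul, intervalIntegral.integral_const_mul,
    integral_pow, integral_pow, integral_id]
  norm_num

lemma QPoly_one (m : ℝ) : QPoly m 1 = 0 := intervalIntegral.integral_same

lemma hasDerivAt_QPoly (m x : ℝ) : HasDerivAt (QPoly m) (qPoly m x) x := by
  have h5 : HasDerivAt (fun γ : ℝ => γ ^ 5) (5 * x ^ 4) x := by simpa using hasDerivAt_pow 5 x
  have h4 : HasDerivAt (fun γ : ℝ => γ ^ 4) (4 * x ^ 3) x := by simpa using hasDerivAt_pow 4 x
  have h2 : HasDerivAt (fun γ : ℝ => γ ^ 2) (2 * x) x := by simpa using hasDerivAt_pow 2 x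
  have h : HasDerivAt (fun γ : ℝ =>
      (m+2)/(m+1)^2 * ((γ^5 - 1)/5) - (m^2+3*m+3)/(m+1)^2 * ((γ^4 - 1)/4) + (γ^2 - 1)/2)
      (qPoly m x) x := by
    have := ((((h5.sub_const 1).div_const 5).const_mul ((m+2)/(m+1)^2)).sub
      (((h4.sub_const 1).div_const 4).const_mul ((m^2+3*m+3)/(m+1)^2))).add
      ((h2.sub_const 1).div_const 2)
    refine this.congr_deriv ?_
    simp only [qPoly]; ring
  exact h.congr_of_eventuallyEq (Filter.Eventually.of_forall fun y => QPoly_eq m y)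

lemma QPoly_neg {m γ : ℝ} (hm : 0 < m) (h1 : 1 < γ) (h2 : γ ≤ m + 1) : QPoly m γ < 0 := by
  rw [QPoly_eq]
  have hne : (m + 1 : ℝ) ≠ 0 := by positivity
  have ht : 0 < γ - 1 := by linarith
  have htm : γ - 1 ≤ m := by linarith
  set t : ℝ := γ - 1 with hts
  have hS : (4*m+8)*t^3 + (-5*m^2+5*m+25)*t^2 + (-20*m^2-20*m+20)*t + (-20*m^2-30*m) < 0 := by
    nlinarith [mul_nonneg (mul_nonneg ht.le ht.le) (sub_nonneg.2 htm),
      mul_nonneg ht.le (sub_nonneg.2 htm),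
      mul_nonneg (mul_nonneg hm.le ht.le) (sub_nonneg.2 htm),
      mul_nonneg (mul_nonneg (mul_nonneg hm.le hm.le) ht.le) (sub_nonneg.2 htm),
      mul_pos hm ht, mul_pos (mul_pos hm hm) ht, mul_pos hm hm,
      mul_pos (mul_pos hm hm) hm, mul_pos (mul_pos (mul_pos hm hm) hm) hm]
  have hkey : 20*(m+1)^2 * ((m+2)/(m+1)^2 * ((γ^5 - 1)/5)
      - (m^2+3*m+3)/(m+1)^2 * ((γ^4 - 1)/4) + (γ^2 - 1)/2)
      = t^2 * ((4*m+8)*t^3 + (-5*m^2+5*m+25)*t^2 + (-20*m^2-20*m+20)*t + (-20*m^2-30*m)) := by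
    rw [hts]; field_simp; ring
  have ht2 : 0 < t^2 := by positivity
  by_contra hge
  push_neg at hge
  have h20 : (0:ℝ) < 20*(m+1)^2 := by positivity
  have hnn := mul_nonneg h20.le hge
  rw [hkey] at hnn
  nlinarith [mul_neg_of_pos_of_neg ht2 hS]

lemma QPoly_nonpos {m γ : ℝ} (hm : 0 < m) (h1 : 1 ≤ γ) (h2 : γ ≤ m + 1) : QPoly m γ ≤ 0 := by
  rcases eq_or_lt_of_le h1 with h | h
  · rw [← h, QPoly_one]
  · exact (QPoly_neg hm h h2).le

lemma pC_diff {m : ℝ} (hm : 0 < m) (C D γ : ℝ) :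
    pC m D γ * γ - pC m C γ * γ = qPoly m γ * (D - C) := by
  have h1 : m ≠ 0 := ne_of_gt hm
  have h2 : (m + 1 : ℝ) ≠ 0 := by positivity
  simp only [pC, Acoef, Bcoef, qPoly]
  field_simp
  ring

set_option maxHeartbeats 1000000 in
theorem stmt12 (m : ℝ) (hm : 0 < m)
    (V : Set ℝ) (hVconn : V.OrdConnected) (hVnd : ∃ a ∈ V, ∃ b ∈ V, a < b)
    (J : Set ℝ) (hJsub : J ⊆ Set.Icc 1 (m + 1)) (hJconn : J.OrdConnected)
    (hJ1 : (1 : ℝ) ∈ J) (hJnd : ∃ a ∈ J, ∃ b ∈ J, a < b)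
    (v : ℝ → ℝ → ℝ) (hsol : ∀ C ∈ V, IsSolOn m C (v C) J) :
    ∀ C ∈ V, ∀ D ∈ V, C < D → ∀ γ ∈ J,
      v D γ - QPoly m γ * (D - C) ≤ v C γ ∧
      v D γ ≤ v D γ - QPoly m γ * (D - C) ∧
      (1 < γ → v D γ < v D γ - QPoly m γ * (D - C)) := by
  intro C hC D hD hCD γ hγ
  obtain ⟨hC1, hCprop⟩ := hsol C hC
  obtain ⟨hD1, hDprop⟩ := hsol D hD
  have hγIcc := hJsub hγ
  have hγ1 : 1 ≤ γ := hγIcc.1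
  have hγm : γ ≤ m + 1 := hγIcc.2
  have hDC : 0 < D - C := sub_pos.2 hCD
  have hQle : QPoly m γ ≤ 0 := QPoly_nonpos hm hγ1 hγm
  have part2 : v D γ ≤ v D γ - QPoly m γ * (D - C) := by nlinarith
  have part3 : 1 < γ → v D γ < v D γ - QPoly m γ * (D - C) := by
    intro h
    have := QPoly_neg hm h hγm
    nlinarith
  refine ⟨?_, part2, part3⟩
  rcases eq_or_lt_of_le hγ1 with heq | hγgt
  · rw [← heq, QPoly_one, hC1, hD1]; norm_num
  -- Now 1 < γ.  Set up the comparison function d and its derivative fd.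
  set d : ℝ → ℝ := fun x => v D x - QPoly m x * (D - C) - v C x with hd_def
  set fd : ℝ → ℝ := fun x => 2 * Real.sqrt 2 * (Real.sqrt (v D x) - Real.sqrt (v C x))
    with hfd_def
  clear_value d fd
  have hIccJ : Icc 1 γ ⊆ J := hJconn.out hJ1 hγ
  have hderiv : ∀ x ∈ J, HasDerivWithinAt d (fd x) J x := by
    intro x hx
    have h1 := (hDprop x hx).2
    have h2 := (hCprop x hx).2
    have hQ : HasDerivWithinAt (fun y => QPoly m y * (D - C)) (qPoly m x * (D - C)) J x :=
      ((hasDerivAt_QPoly m x).hasDerivWithinAt).mul_const _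
    have h3 := (h1.sub hQ).sub h2
    rw [hd_def]
    refine h3.congr_deriv ?_
    have hpq := pC_diff hm C D x
    simp only [hfd_def, odeRHS]
    ring_nf
    ring_nf at hpq
    linarith
  have hcontJ : ContinuousOn d J := fun x hx => (hderiv x hx).continuousWithinAt
  have hd1 : d 1 = 0 := by simp [hd_def, QPoly_one, hC1, hD1]
  have hIci : ∀ a b : ℝ, Icc a b ⊆ J → ∀ x ∈ Ico a b, HasDerivWithinAt d (fd x) (Ici x) x := by
    intro a b hab x hx
    have hxJ : x ∈ J := hab ⟨hx.1, hx.2.le⟩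
    refine (hderiv x hxJ).mono_of_mem_nhdsWithin ?_
    rw [mem_nhdsWithin]
    exact ⟨Iio b, isOpen_Iio, hx.2, fun y hy => hab ⟨hx.1.trans hy.2, hy.1.le⟩⟩
  -- choose δ so that v C, v D > 1 near 1
  have hcC : ContinuousWithinAt (v C) J 1 := ((hCprop 1 hJ1).2).continuousWithinAt
  have hcD : ContinuousWithinAt (v D) J 1 := ((hDprop 1 hJ1).2).continuousWithinAt
  have hsetC : {x | 1 < v C x} ∈ 𝓝[J] 1 := hcC (Ioi_mem_nhds (by rw [hC1]; norm_num))
  have hsetD : {x | 1 < v D x} ∈ 𝓝[J] 1 := hcD (Ioi_mem_nhds (by rw [hD1]; norm_num))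
  obtain ⟨δ, hδpos, hδ⟩ := Metric.mem_nhdsWithin_iff.1 (inter_mem hsetC hsetD)
  set b : ℝ := min γ (1 + δ/2) with hb_def
  have hb1 : 1 < b := lt_min hγgt (by linarith)
  have hbγ : b ≤ γ := min_le_left _ _
  have hb2 : b ≤ 1 + δ/2 := min_le_right _ _
  clear_value b
  have hIccbJ : Icc 1 b ⊆ J := fun y hy => hIccJ ⟨hy.1, hy.2.trans hbγ⟩
  have hsqrt2pos : (0:ℝ) < Real.sqrt 2 := Real.sqrt_pos.2 (by norm_num)
  have hsqrt2lt : Real.sqrt 2 < 2 := by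
    nlinarith [Real.sq_sqrt (by norm_num : (0:ℝ) ≤ 2), Real.sqrt_nonneg 2]
  -- Step B : d ≤ 0 on [1, b]
  have stepB : ∀ x ∈ Icc 1 b, d x ≤ 0 := by
    have main : ∀ ε > 0, ∀ y ∈ Icc 1 b, d y ≤ ε * Real.exp (2*(y-1)) := by
      intro ε hε
      have hB : ∀ z : ℝ, HasDerivAt (fun z : ℝ => ε * Real.exp (2*(z-1)))
          (ε * (Real.exp (2*(z-1)) * 2)) z := by
        intro z
        have h0 : HasDerivAt (fun z : ℝ => 2*(z-1)) 2 z := by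
          simpa using ((hasDerivAt_id z).sub_const 1).const_mul 2
        simpa using (h0.exp).const_mul ε
      refine image_le_of_deriv_right_lt_deriv_boundary (hcontJ.mono hIccbJ)
        (hIci 1 b hIccbJ) ?_ hB ?_
      · rw [hd1]; simp; positivity
      · intro x hx hdx
        have hxJ : x ∈ J := hIccbJ ⟨hx.1, hx.2.le⟩
        have hxball : x ∈ Metric.ball (1:ℝ) δ := by
          rw [Metric.mem_ball, Real.dist_eq, abs_of_nonneg (by linarith [hx.1])]
          have : x < 1 + δ/2 := lt_of_lt_of_le hx.2 hb2
          linarith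
        obtain ⟨hvC1', hvD1'⟩ := hδ ⟨hxball, hxJ⟩
        have hvC1 : 1 < v C x := hvC1'
        have hvD1 : 1 < v D x := hvD1'
        have hvC0 : (0:ℝ) ≤ v C x := by linarith
        have hvD0 : (0:ℝ) ≤ v D x := by linarith
        have hxm : x ≤ m + 1 := by
          have := hx.2.le.trans hbγ; linarith
        have hQx : QPoly m x ≤ 0 := QPoly_nonpos hm hx.1 hxm
        set sa := Real.sqrt (v D x) with hsa_def
        set sc := Real.sqrt (v C x) with hsc_def
        have hsa1 : 1 ≤ sa := Real.one_le_sqrt.2 hvD1.le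
        have hsc1 : 1 ≤ sc := Real.one_le_sqrt.2 hvC1.le
        have hsaa : sa^2 = v D x := Real.sq_sqrt hvD0
        have hscc : sc^2 = v C x := Real.sq_sqrt hvC0
        have hBpos : 0 < ε * Real.exp (2*(x-1)) := by positivity
        have hdiff : v D x - v C x ≤ d x := by
          simp only [hd_def]
          nlinarith
        rw [hdx] at hdiff
        simp only [hfd_def]
        rcases le_or_gt sa sc with hcase | hcase
        · have : 2 * Real.sqrt 2 * (sa - sc) ≤ 0 := by nlinarith
          nlinarith
        · -- sa > sc, so (sa - sc) * 2 ≤ (sa - sc) * (sa + sc) = v D x - v C x ≤ B x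
          have h1 : (sa - sc) * (sa + sc) = v D x - v C x := by nlinarith
          have h2 : (sa - sc) * 2 ≤ (sa - sc) * (sa + sc) :=
            mul_le_mul_of_nonneg_left (by linarith) (by linarith)
          have h3 : sa - sc ≤ ε * Real.exp (2*(x-1)) / 2 := by linarith
          nlinarith
    intro x hx
    by_contra hpos
    push_neg at hpos
    have hK : (0:ℝ) < Real.exp (2*(b-1)) := Real.exp_pos _
    have hKx : Real.exp (2*(x-1)) ≤ Real.exp (2*(b-1)) :=
      Real.exp_le_exp.2 (by linarith [hx.2])
    have h := main (d x / (2 * Real.exp (2*(b-1)))) (by positivity) x hx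
    have : d x / (2 * Real.exp (2*(b-1))) * Real.exp (2*(x-1)) ≤ d x / 2 := by
      rw [div_mul_eq_mul_div, div_le_div_iff₀ (by positivity) (by norm_num)]
      nlinarith
    have hfin : d x ≤ d x / 2 := le_trans h this
    linarith
  -- Step C : d ≤ 0 on [b, γ]
  have hIccbγJ : Icc b γ ⊆ J := fun y hy => hIccJ ⟨hb1.le.trans hy.1, hy.2⟩
  have stepC : ∀ x ∈ Icc b γ, d x ≤ (fun _ : ℝ => (0:ℝ)) x := by
    refine image_le_of_deriv_right_lt_deriv_boundary (hcontJ.mono hIccbγJ)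
      (hIci b γ hIccbγJ) ?_ (fun x => hasDerivAt_const x 0) ?_
    · exact stepB b ⟨hb1.le, le_refl b⟩
    · intro x hx hdx
      have hxJ : x ∈ J := hIccbγJ ⟨hx.1, hx.2.le⟩
      have hx1 : 1 < x := lt_of_lt_of_le hb1 hx.1
      have hxm : x ≤ m + 1 := hx.2.le.trans hγm
      have hQx : QPoly m x < 0 := QPoly_neg hm hx1 hxm
      have hvD0 : (0:ℝ) ≤ v D x := (hDprop x hxJ).1
      have hvv : v D x < v C x := by
        have hdx0 : v D x - QPoly m x * (D - C) - v C x = 0 := by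
          have := hdx
          simp only [hd_def] at this
          exact this
        nlinarith [mul_pos (neg_pos.2 hQx) hDC]
      have hsq : Real.sqrt (v D x) < Real.sqrt (v C x) := Real.sqrt_lt_sqrt hvD0 hvv
      simp only [hfd_def]
      have : (0:ℝ) < 2 * Real.sqrt 2 := by positivity
      nlinarith
  have := stepC γ ⟨hbγ, le_refl γ⟩
  simp only [hd_def] at this
  linarith
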